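/- R(B_4, B_5) ≤ 19. That is: for every coloring of the edges of the complete graph on 19 vertices with 2 colors, either color 1 contains a subgraph isomorphic to the book B_4 or color 2 contains a subgraph isomorphic to the book B_5. -/

import Mathlib

/-- The book `Bₙ = K₂ + (n-2)·K₁` with `m = n - 2` pages: two spine vertices (the left
summand) adjacent to each other and to all `m` page vertices (the right summand), with no
edges among the page vertices. -/
def book (m : ℕ) : SimpleGraph (Fin 2 ⊕ Fin m) where
  Adj u v := u ≠ v ∧ (u.isLeft ∨ v.isLeft)
  symm := by
    constructor
    rintro u v ⟨h1, h2⟩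
    exact ⟨h1.symm, h2.symm⟩
  loopless := by
    constructor
    rintro u ⟨h, -⟩
    exact h rfl

/-- The coloring `c` of the edges of the complete graph on `Fin n` with `k` colors contains a
copy of `G` all of whose edges have color `i`. -/
def HasMonoCopy {V : Type} {n k : ℕ} (G : SimpleGraph V)
    (c : Sym2 (Fin n) → Fin k) (i : Fin k) : Prop :=
  ∃ f : V → Fin n, Function.Injective f ∧ ∀ u v : V, G.Adj u v → c s(f u, f v) = i

namespace RB45

open Finset

lemma quad1 : ∀ r b : ℕ, r + b = 18 → 144 ≤ (r*r - r) + (b*b - b) := by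
  intro r b h
  have hb : b = 18 - r := by omega
  subst hb
  have hr : r ≤ 18 := by omega
  interval_cases r <;> omega

lemma quad2 : ∀ r b : ℕ, r + b = 18 → r*b + b*r ≤ 162 := by
  intro r b h
  have hb : b = 18 - r := by omega
  subst hb
  have hr : r ≤ 18 := by omega
  interval_cases r <;> omega

variable (c : Sym2 (Fin 19) → Fin 2)

lemma book2_copy {u v w1 w2 : Fin 19}
    (huv : u ≠ v) (h1u : w1 ≠ u) (h1v : w1 ≠ v) (h2u : w2 ≠ u) (h2v : w2 ≠ v)
    (h12 : w1 ≠ w2) (e0 : c s(u,v) = 0) (e1 : c s(u,w1) = 0) (e2 : c s(v,w1) = 0)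
    (e3 : c s(u,w2) = 0) (e4 : c s(v,w2) = 0) : HasMonoCopy (book 2) c 0 := by
  refine ⟨Sum.elim ![u,v] ![w1,w2], ?_, ?_⟩
  · intro x y hxy
    rcases x with x | x <;> rcases y with y | y <;>
      fin_cases x <;> fin_cases y <;> simp_all
  · rintro x y ⟨hne, hl⟩
    rcases x with x | x <;> rcases y with y | y <;>
      fin_cases x <;> fin_cases y <;> simp_all [book, Sym2.eq_swap]

lemma book3_copy {u v w1 w2 w3 : Fin 19}
    (huv : u ≠ v) (h1u : w1 ≠ u) (h1v : w1 ≠ v) (h2u : w2 ≠ u) (h2v : w2 ≠ v)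
    (h3u : w3 ≠ u) (h3v : w3 ≠ v)
    (h12 : w1 ≠ w2) (h13 : w1 ≠ w3) (h23 : w2 ≠ w3)
    (e0 : c s(u,v) = 1) (e1 : c s(u,w1) = 1) (e2 : c s(v,w1) = 1)
    (e3 : c s(u,w2) = 1) (e4 : c s(v,w2) = 1)
    (e5 : c s(u,w3) = 1) (e6 : c s(v,w3) = 1) : HasMonoCopy (book 3) c 1 := by
  refine ⟨Sum.elim ![u,v] ![w1,w2,w3], ?_, ?_⟩
  · intro x y hxy
    rcases x with x | x <;> rcases y with y | y <;>
      fin_cases x <;> fin_cases y <;> simp_all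
  · rintro x y ⟨hne, hl⟩
    rcases x with x | x <;> rcases y with y | y <;>
      fin_cases x <;> fin_cases y <;> simp_all [book, Sym2.eq_swap]

/-- ordered triples of distinct vertices with a monochromatic cherry at the first vertex -/
def SS : Finset (Fin 19 × Fin 19 × Fin 19) :=
  Finset.univ.filter (fun t => (t.1 ≠ t.2.1 ∧ t.1 ≠ t.2.2 ∧ t.2.1 ≠ t.2.2) ∧
    c s(t.1, t.2.1) = c s(t.1, t.2.2))

/-- ordered triples of distinct vertices with a bichromatic cherry at the first vertex -/
def BB : Finset (Fin 19 × Fin 19 × Fin 19) :=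
  Finset.univ.filter (fun t => (t.1 ≠ t.2.1 ∧ t.1 ≠ t.2.2 ∧ t.2.1 ≠ t.2.2) ∧
    c s(t.1, t.2.1) ≠ c s(t.1, t.2.2))

/-- monochromatic ordered triangles -/
def OO : Finset (Fin 19 × Fin 19 × Fin 19) :=
  (SS c).filter (fun t => c s(t.2.1, t.2.2) = c s(t.1, t.2.1))

def D1 : Finset (Fin 19 × Fin 19 × Fin 19) :=
  (SS c).filter (fun t => ¬ c s(t.2.1, t.2.2) = c s(t.1, t.2.1))

def D2 : Finset (Fin 19 × Fin 19 × Fin 19) :=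
  (BB c).filter (fun t => c s(t.2.1, t.2.2) = c s(t.1, t.2.1))

def D3 : Finset (Fin 19 × Fin 19 × Fin 19) :=
  (BB c).filter (fun t => ¬ c s(t.2.1, t.2.2) = c s(t.1, t.2.1))

lemma S_split : (OO c).card + (D1 c).card = (SS c).card :=
  Finset.card_filter_add_card_filter_not _

lemma B_split : (D2 c).card + (D3 c).card = (BB c).card :=
  Finset.card_filter_add_card_filter_not _

lemma D2_card : (D2 c).card = (D1 c).card := by
  apply Finset.card_nbij' (i := fun t => (t.2.1, t.1, t.2.2)) (j := fun t => (t.2.1, t.1, t.2.2))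
  · intro t ht
    simp only [Finset.mem_coe, D2, D1, SS, BB, Finset.mem_filter, Finset.mem_univ, true_and] at ht ⊢
    obtain ⟨⟨⟨n1, n2, n3⟩, hne⟩, heq⟩ := ht
    refine ⟨⟨⟨n1.symm, n3, n2⟩, ?_⟩, ?_⟩
    · rw [Sym2.eq_swap]; rw [heq]
    · rw [show s(t.1, t.2.2) = s(t.1, t.2.2) from rfl, Sym2.eq_swap (a := t.2.1) (b := t.1)]
      intro h; exact hne (by omega)
  · intro t ht
    simp only [Finset.mem_coe, D2, D1, SS, BB, Finset.mem_filter, Finset.mem_univ, true_and] at ht ⊢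
    obtain ⟨⟨⟨n1, n2, n3⟩, heq⟩, hne⟩ := ht
    refine ⟨⟨⟨n1.symm, n3, n2⟩, ?_⟩, ?_⟩
    · rw [Sym2.eq_swap (a := t.2.1) (b := t.1)]
      intro h; exact hne (by omega)
    · rw [Sym2.eq_swap (a := t.2.1) (b := t.1)]
      omega
  · intro t _; rfl
  · intro t _; rfl

lemma D3_card : (D3 c).card = (D1 c).card := by
  apply Finset.card_nbij' (i := fun t => (t.2.2, t.1, t.2.1)) (j := fun t => (t.2.1, t.2.2, t.1))
  · intro t ht
    simp only [Finset.mem_coe, D3, D1, SS, BB, Finset.mem_filter, Finset.mem_univ, true_and] at ht ⊢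
    obtain ⟨⟨⟨n1, n2, n3⟩, hne⟩, hne2⟩ := ht
    have e1 : c s(t.2.2, t.1) = c s(t.1, t.2.2) := by rw [Sym2.eq_swap]
    have e2 : c s(t.2.2, t.2.1) = c s(t.2.1, t.2.2) := by rw [Sym2.eq_swap]
    have e3 : c s(t.1, t.2.1) = c s(t.2.1, t.1) := by rw [Sym2.eq_swap]
    refine ⟨⟨⟨n2.symm, n3.symm, n1⟩, ?_⟩, ?_⟩ <;> omega
  · intro t ht
    simp only [Finset.mem_coe, D3, D1, SS, BB, Finset.mem_filter, Finset.mem_univ, true_and] at ht ⊢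
    obtain ⟨⟨⟨n1, n2, n3⟩, heq⟩, hne⟩ := ht
    have e1 : c s(t.2.1, t.2.2) = c s(t.2.2, t.2.1) := by rw [Sym2.eq_swap]
    have e2 : c s(t.2.2, t.1) = c s(t.1, t.2.2) := by rw [Sym2.eq_swap]
    have e3 : c s(t.2.1, t.1) = c s(t.1, t.2.1) := by rw [Sym2.eq_swap]
    refine ⟨⟨⟨n3, n1.symm, n2.symm⟩, ?_⟩, ?_⟩ <;> omega
  · intro t _; rfl
  · intro t _; rfl

def RN (u : Fin 19) : Finset (Fin 19) := Finset.univ.filter (fun v => v ≠ u ∧ c s(u,v) = 0)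
def BN (u : Fin 19) : Finset (Fin 19) := Finset.univ.filter (fun v => v ≠ u ∧ c s(u,v) = 1)

lemma RN_BN (u : Fin 19) : (RN c u).card + (BN c u).card = 18 := by
  classical
  have hd : Disjoint (RN c u) (BN c u) := by
    rw [Finset.disjoint_left]
    intro a ha hb
    simp only [RN, BN, mem_filter] at ha hb
    omega
  have hu : RN c u ∪ BN c u = Finset.univ.erase u := by
    ext v
    simp only [RN, BN, mem_union, mem_filter, mem_univ, true_and, mem_erase, and_true]
    omega
  rw [← Finset.card_union_of_disjoint hd, hu, Finset.card_erase_of_mem (mem_univ u)]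
  simp

lemma S_fiber (u : Fin 19) : 144 ≤ ((SS c).filter (fun t => t.1 = u)).card := by
  classical
  have hcard : ((SS c).filter fun t => t.1 = u).card
      = ((RN c u).offDiag ∪ (BN c u).offDiag).card := by
    apply Finset.card_nbij' (i := fun t => t.2) (j := fun p => (u, p))
    · intro t ht
      simp only [Finset.mem_coe, SS, mem_filter, mem_univ, true_and] at ht
      obtain ⟨⟨⟨n1, n2, n3⟩, heq⟩, h1⟩ := ht
      subst h1
      simp only [RN, BN, mem_union, Finset.mem_offDiag, mem_filter, mem_univ, true_and, Finset.mem_coe]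
      omega
    · intro p hp
      simp only [RN, BN, mem_union, Finset.mem_offDiag, mem_filter, mem_univ, true_and, Finset.mem_coe] at hp
      simp only [Finset.mem_coe, SS, mem_filter, mem_univ, true_and]
      refine ⟨⟨?_, ?_⟩, trivial⟩ <;> omega
    · intro t ht
      simp only [Finset.mem_coe, mem_filter] at ht
      exact Prod.ext ht.2.symm rfl
    · intro p _; rfl
  have hd : Disjoint (RN c u).offDiag (BN c u).offDiag := by
    rw [Finset.disjoint_left]
    intro p hp hq
    simp only [RN, BN, Finset.mem_offDiag, mem_filter, mem_univ, true_and] at hp hq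
    omega
  rw [hcard, Finset.card_union_of_disjoint hd, Finset.offDiag_card, Finset.offDiag_card]
  exact quad1 _ _ (RN_BN c u)

lemma B_fiber (u : Fin 19) : ((BB c).filter (fun t => t.1 = u)).card ≤ 162 := by
  classical
  have hcard : ((BB c).filter fun t => t.1 = u).card
      = ((RN c u) ×ˢ (BN c u) ∪ (BN c u) ×ˢ (RN c u)).card := by
    apply Finset.card_nbij' (i := fun t => t.2) (j := fun p => (u, p))
    · intro t ht
      simp only [Finset.mem_coe, BB, mem_filter, mem_univ, true_and] at ht
      obtain ⟨⟨⟨n1, n2, n3⟩, heq⟩, h1⟩ := ht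
      subst h1
      simp only [RN, BN, mem_union, Finset.mem_product, mem_filter, mem_univ, true_and, Finset.mem_coe]
      omega
    · intro p hp
      simp only [RN, BN, mem_union, Finset.mem_product, mem_filter, mem_univ, true_and, Finset.mem_coe] at hp
      simp only [Finset.mem_coe, BB, mem_filter, mem_univ, true_and]
      have hne : p.1 ≠ p.2 := by
        intro h
        rw [h] at hp
        omega
      refine ⟨⟨?_, ?_⟩, trivial⟩ <;> omega
    · intro t ht
      simp only [Finset.mem_coe, mem_filter] at ht
      exact Prod.ext ht.2.symm rfl
    · intro p _; rfl
  have hd : Disjoint ((RN c u) ×ˢ (BN c u)) ((BN c u) ×ˢ (RN c u)) := by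
    rw [Finset.disjoint_left]
    intro p hp hq
    simp only [RN, BN, Finset.mem_product, mem_filter, mem_univ, true_and] at hp hq
    omega
  rw [hcard, Finset.card_union_of_disjoint hd, Finset.card_product, Finset.card_product]
  exact quad2 _ _ (RN_BN c u)

def W0 (u v : Fin 19) : Finset (Fin 19) :=
  Finset.univ.filter (fun w => u ≠ v ∧ c s(u,v) = 0 ∧ w ≠ u ∧ w ≠ v ∧
    c s(u,w) = 0 ∧ c s(v,w) = 0)

def W1 (u v : Fin 19) : Finset (Fin 19) :=
  Finset.univ.filter (fun w => u ≠ v ∧ c s(u,v) = 1 ∧ w ≠ u ∧ w ≠ v ∧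
    c s(u,w) = 1 ∧ c s(v,w) = 1)

lemma W0_card (h0 : ¬ HasMonoCopy (book 2) c 0) (u v : Fin 19) : (W0 c u v).card ≤ 1 := by
  rw [Finset.card_le_one]
  intro a ha b hb
  by_contra hab
  simp only [W0, mem_filter, mem_univ, true_and] at ha hb
  exact h0 (book2_copy c ha.1 ha.2.2.1 ha.2.2.2.1 hb.2.2.1 hb.2.2.2.1 hab
    ha.2.1 ha.2.2.2.2.1 ha.2.2.2.2.2 hb.2.2.2.2.1 hb.2.2.2.2.2)

lemma W1_card (h1 : ¬ HasMonoCopy (book 3) c 1) (u v : Fin 19) : (W1 c u v).card ≤ 2 := by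
  by_contra hlt
  push_neg at hlt
  obtain ⟨s3, hsub, hs3⟩ :=
    Finset.exists_subset_card_eq (show 3 ≤ (W1 c u v).card by omega)
  rw [Finset.card_eq_three] at hs3
  obtain ⟨x, y, z, hxy, hxz, hyz, rfl⟩ := hs3
  have hx := hsub (by simp : x ∈ ({x, y, z} : Finset (Fin 19)))
  have hz := hsub (by simp : z ∈ ({x, y, z} : Finset (Fin 19)))
  have hy' := hsub (by simp : y ∈ ({x, y, z} : Finset (Fin 19)))
  simp only [W1, mem_filter, mem_univ, true_and] at hx hy' hz
  exact h1 (book3_copy c hx.1 hx.2.2.1 hx.2.2.2.1 hy'.2.2.1 hy'.2.2.2.1 hz.2.2.1 hz.2.2.2.1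
    hxy hxz hyz hx.2.1 hx.2.2.2.2.1 hx.2.2.2.2.2 hy'.2.2.2.2.1 hy'.2.2.2.2.2
    hz.2.2.2.2.1 hz.2.2.2.2.2)

lemma O0_bound (h0 : ¬ HasMonoCopy (book 2) c 0) :
    (((OO c).filter (fun t => c s(t.1, t.2.1) = 0)).card) ≤ 361 := by
  classical
  rw [Finset.card_eq_sum_card_fiberwise
    (f := fun t => (t.1, t.2.1)) (t := (Finset.univ : Finset (Fin 19 × Fin 19)))
    (fun x _ => mem_univ _)]
  calc ∑ p : Fin 19 × Fin 19,
        ((((OO c).filter (fun t => c s(t.1, t.2.1) = 0)).filter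
          (fun t => (t.1, t.2.1) = p)).card)
      ≤ (Finset.univ : Finset (Fin 19 × Fin 19)).card • 1 := by
        apply Finset.sum_le_card_nsmul
        intro p _
        refine le_trans (Finset.card_le_card_of_injOn (fun t => t.2.2) ?_ ?_)
          (W0_card c h0 p.1 p.2)
        · rintro ⟨a, b, w⟩ ht
          simp only [Finset.mem_coe, OO, SS, W0, mem_filter, mem_univ, true_and, Prod.mk.injEq] at ht ⊢
          rw [Prod.ext_iff] at ht
          obtain ⟨⟨⟨⟨⟨n1, n2, n3⟩, he⟩, h23⟩, h120⟩, hp1, hp2⟩ := ht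
          simp only at hp1 hp2
          subst hp1; subst hp2
          refine ⟨n1, h120, n2.symm, n3.symm, ?_, ?_⟩ <;> omega
        · intro t ht t' ht' hww
          simp only [Finset.coe_filter, Set.mem_setOf_eq] at ht ht'
          have h12 := ht.2.trans ht'.2.symm
          have e1 : t.1 = t'.1 := by have := congrArg Prod.fst h12; simpa using this
          have e2 : t.2.1 = t'.2.1 := by have := congrArg Prod.snd h12; simpa using this
          have e3 : t.2.2 = t'.2.2 := hww
          obtain ⟨a, b, w⟩ := t
          obtain ⟨a', b', w'⟩ := t'
          simp_all
    _ = 361 := by simp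

lemma O1_bound (h1 : ¬ HasMonoCopy (book 3) c 1) :
    (((OO c).filter (fun t => ¬ c s(t.1, t.2.1) = 0)).card) ≤ 722 := by
  classical
  rw [Finset.card_eq_sum_card_fiberwise
    (f := fun t => (t.1, t.2.1)) (t := (Finset.univ : Finset (Fin 19 × Fin 19)))
    (fun x _ => mem_univ _)]
  calc ∑ p : Fin 19 × Fin 19,
        ((((OO c).filter (fun t => ¬ c s(t.1, t.2.1) = 0)).filter
          (fun t => (t.1, t.2.1) = p)).card)
      ≤ (Finset.univ : Finset (Fin 19 × Fin 19)).card • 2 := by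
        apply Finset.sum_le_card_nsmul
        intro p _
        refine le_trans (Finset.card_le_card_of_injOn (fun t => t.2.2) ?_ ?_)
          (W1_card c h1 p.1 p.2)
        · rintro ⟨a, b, w⟩ ht
          simp only [Finset.mem_coe, OO, SS, W1, mem_filter, mem_univ, true_and, Prod.mk.injEq] at ht ⊢
          rw [Prod.ext_iff] at ht
          obtain ⟨⟨⟨⟨⟨n1, n2, n3⟩, he⟩, h23⟩, h120⟩, hp1, hp2⟩ := ht
          simp only at hp1 hp2
          subst hp1; subst hp2
          refine ⟨n1, ?_, n2.symm, n3.symm, ?_, ?_⟩ <;> omega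
        · intro t ht t' ht' hww
          simp only [Finset.coe_filter, Set.mem_setOf_eq] at ht ht'
          have h12 := ht.2.trans ht'.2.symm
          have e1 : t.1 = t'.1 := by have := congrArg Prod.fst h12; simpa using this
          have e2 : t.2.1 = t'.2.1 := by have := congrArg Prod.snd h12; simpa using this
          have e3 : t.2.2 = t'.2.2 := hww
          obtain ⟨a, b, w⟩ := t
          obtain ⟨a', b', w'⟩ := t'
          simp_all
    _ = 722 := by simp

end RB45

open RB45 Finset in
/-- `R(B₄, B₅) ≤ 19`, where `B₄ = book 2` and `B₅ = book 3`. -/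
theorem ramsey_B4_B5_le :
    ∀ c : Sym2 (Fin 19) → Fin 2,
      HasMonoCopy (book 2) c 0 ∨ HasMonoCopy (book 3) c 1 := by
  intro c
  by_contra hcon
  push_neg at hcon
  obtain ⟨h0, h1⟩ := hcon
  have hS : 2736 ≤ (SS c).card := by
    rw [Finset.card_eq_sum_card_fiberwise
      (f := fun t => t.1) (t := (Finset.univ : Finset (Fin 19))) (fun x _ => mem_univ _)]
    calc (2736 : ℕ) = (Finset.univ : Finset (Fin 19)).card • 144 := by simp
      _ ≤ _ := Finset.card_nsmul_le_sum _ _ _ (fun u _ => S_fiber c u)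
  have hB : (BB c).card ≤ 3078 := by
    rw [Finset.card_eq_sum_card_fiberwise
      (f := fun t => t.1) (t := (Finset.univ : Finset (Fin 19))) (fun x _ => mem_univ _)]
    calc ∑ u : Fin 19, ((BB c).filter (fun t => t.1 = u)).card
        ≤ (Finset.univ : Finset (Fin 19)).card • 162 :=
          Finset.sum_le_card_nsmul _ _ _ (fun u _ => B_fiber c u)
      _ = 3078 := by simp
  have hO : (OO c).card ≤ 1083 := by
    have hsplit := Finset.card_filter_add_card_filter_not
      (s := OO c) (p := fun t => c s(t.1, t.2.1) = 0)
    have := O0_bound c h0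
    have := O1_bound c h1
    omega
  have h2 := S_split c
  have h3 := B_split c
  have h4 := D2_card c
  have h5 := D3_card c
  omega
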